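/- Let k, s ∈ ℕ with s ≥ 1 and i ∈ ℕ. Let Ω be the s × s matrix whose (a, b) entry (1 ≤ a, b ≤ s) is the binomial coefficient C(k, i + b - a), with the convention that C(ξ, η) = 0 if η < 0 or η > ξ. Then det Ω = ∏_{j=0}^{s-1} C(k+s-1-j, i) / C(i+j, i). -/

import Mathlib

open Polynomial Finset

/-- Pascal splitting of an alternating sum. -/
lemma vz_pascal_sum (n : ℕ) (f : ℕ → ℚ) :
    ∑ c ∈ range (n+2), (-1)^c * ((n+1).choose c : ℚ) * f c
    = ∑ c ∈ range (n+1), (-1)^c * (n.choose c : ℚ) * f c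
      - ∑ c ∈ range (n+1), (-1)^c * (n.choose c : ℚ) * f (c+1) := by
  rw [Finset.sum_range_succ' _ (n+1)]
  have h1 : ∀ c, ((n+1).choose (c+1) : ℚ) = (n.choose c : ℚ) + (n.choose (c+1) : ℚ) := by
    intro c; exact_mod_cast congrArg (Nat.cast (R := ℚ)) (Nat.choose_succ_succ n c)
  simp_rw [h1]
  have h2 : ∑ c ∈ range (n+1), (-1:ℚ)^(c+1) * ((n.choose c : ℚ) + (n.choose (c+1) : ℚ)) * f (c+1)
      = (∑ c ∈ range (n+1), (-1:ℚ)^(c+1) * (n.choose c : ℚ) * f (c+1))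
        + ∑ c ∈ range (n+1), (-1:ℚ)^(c+1) * (n.choose (c+1) : ℚ) * f (c+1) := by
    rw [← Finset.sum_add_distrib]; apply Finset.sum_congr rfl; intro c _; ring
  rw [h2]
  have h3 : ∑ c ∈ range (n+1), (-1:ℚ)^(c+1) * (n.choose (c+1) : ℚ) * f (c+1)
      = ∑ c ∈ range n, (-1:ℚ)^(c+1) * (n.choose (c+1) : ℚ) * f (c+1) := by
    rw [Finset.sum_range_succ, Nat.choose_succ_self]; push_cast; ring
  rw [h3]
  have h4 : ∑ c ∈ range (n+1), (-1:ℚ)^c * (n.choose c : ℚ) * f c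
      = (∑ c ∈ range n, (-1:ℚ)^(c+1) * (n.choose (c+1) : ℚ) * f (c+1))
        + (-1:ℚ)^0 * (n.choose 0 : ℚ) * f 0 := Finset.sum_range_succ' _ n
  rw [h4]
  simp only [pow_zero, Nat.choose_zero_right, Nat.cast_one, one_mul]
  have : ∀ c ∈ range (n+1), (-1:ℚ)^(c+1) * (n.choose c : ℚ) * f (c+1)
      = -((-1:ℚ)^c * (n.choose c : ℚ) * f (c+1)) := by intro c _; ring
  rw [Finset.sum_congr rfl this, Finset.sum_neg_distrib]
  ring

lemma vz_alt_choose_zero (n : ℕ) (hn : n ≠ 0) :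
    ∑ c ∈ range (n+1), (-1:ℚ)^c * (n.choose c : ℚ) = 0 := by
  have := Int.alternating_sum_range_choose_of_ne hn
  have := congrArg (fun z : ℤ => (z : ℚ)) this
  push_cast at this
  simpa using this

/-- Alternating sums with binomial weights kill polynomials of low degree. -/
lemma vz_alt_sum_poly (n : ℕ) (p : ℚ[X]) (hp : p.natDegree < n) :
    ∑ c ∈ range (n+1), (-1)^c * (n.choose c : ℚ) * p.eval (c : ℚ) = 0 := by
  induction n generalizing p with
  | zero => omega
  | succ n ih =>
    by_cases hc : p.natDegree = 0
    · obtain ⟨a, rfl⟩ := Polynomial.natDegree_eq_zero.mp hc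
      simp_rw [Polynomial.eval_C]
      rw [← Finset.sum_mul, vz_alt_choose_zero (n+1) (Nat.succ_ne_zero n), zero_mul]
    · set q := p - p.comp (X + 1) with hq
      have hp0 : p ≠ 0 := fun h => hc (by simp [h])
      have hdx : (X + 1 : ℚ[X]).natDegree = 1 := natDegree_X_add_C 1
      have hcompdeg : (p.comp (X + 1)).natDegree = p.natDegree := by
        rw [natDegree_comp, hdx, mul_one]
      have hcomp0 : p.comp (X + 1) ≠ 0 := by
        intro h
        have := hcompdeg
        rw [h, natDegree_zero] at this
        exact hc this.symm
      have hlead : p.leadingCoeff = (p.comp (X + 1)).leadingCoeff := by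
        rw [leadingCoeff_comp (by rw [hdx]; norm_num)]
        have : (X + 1 : ℚ[X]).leadingCoeff = 1 := by
          simpa using leadingCoeff_X_add_C (1:ℚ)
        rw [this, one_pow, mul_one]
      have hdeg : q.degree < p.degree := by
        apply Polynomial.degree_sub_lt _ hp0 hlead
        rw [degree_eq_natDegree hp0, degree_eq_natDegree hcomp0, hcompdeg]
      have key : ∑ c ∈ range (n+2), (-1)^c * ((n+1).choose c : ℚ) * p.eval (c:ℚ)
          = ∑ c ∈ range (n+1), (-1)^c * (n.choose c : ℚ) * q.eval (c:ℚ) := by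
        rw [vz_pascal_sum n (fun c => p.eval (c:ℚ)), ← Finset.sum_sub_distrib]
        apply Finset.sum_congr rfl
        intro c _
        rw [hq]
        simp only [eval_sub, eval_comp, eval_add, eval_X, eval_one]
        push_cast
        ring
      rw [key]
      by_cases hq0 : q = 0
      · simp [hq0]
      · exact ih q (by
          have := Polynomial.natDegree_lt_natDegree hq0 hdeg
          omega)
lemma vz_inv_sum (n : ℕ) : ∀ x : ℚ, 0 < x →
    ∑ c ∈ range (n+1), (-1)^c * (n.choose c : ℚ) * (x + c)⁻¹
    = (n.factorial : ℚ) / ∏ t ∈ range (n+1), (x + t) := by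
  induction n with
  | zero => intro x hx; simp
  | succ n ih =>
    intro x hx
    have hne : ∀ t ∈ range (n+2), x + (t:ℚ) ≠ 0 := by
      intro t _; positivity
    have hP1 : ∏ t ∈ range (n+2), (x + (t:ℚ)) = (∏ t ∈ range (n+1), (x + t)) * (x + (n+1)) := by
      rw [Finset.prod_range_succ]; push_cast; ring
    have hP2 : ∏ t ∈ range (n+2), (x + (t:ℚ)) = (∏ t ∈ range (n+1), ((x+1) + t)) * x := by
      rw [Finset.prod_range_succ' (fun t => x + (t:ℚ)) (n+1)]
      simp only [Nat.cast_zero, add_zero]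
      congr 1
      apply Finset.prod_congr rfl; intro t _; push_cast; ring
    have hA : (∏ t ∈ range (n+1), (x + (t:ℚ))) ≠ 0 := by
      apply Finset.prod_ne_zero_iff.mpr; intro t _; positivity
    have hB : (∏ t ∈ range (n+1), ((x+1) + (t:ℚ))) ≠ 0 := by
      apply Finset.prod_ne_zero_iff.mpr; intro t _; positivity
    rw [vz_pascal_sum n (fun c => (x + (c:ℚ))⁻¹)]
    have e1 : ∑ c ∈ range (n+1), (-1:ℚ)^c * (n.choose c : ℚ) * (x + (c:ℚ))⁻¹
        = (n.factorial : ℚ) / ∏ t ∈ range (n+1), (x + t) := ih x hx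
    have e2 : ∑ c ∈ range (n+1), (-1:ℚ)^c * (n.choose c : ℚ) * (x + ((c+1 : ℕ):ℚ))⁻¹
        = (n.factorial : ℚ) / ∏ t ∈ range (n+1), ((x+1) + t) := by
      rw [← ih (x+1) (by linarith)]
      apply Finset.sum_congr rfl; intro c _; push_cast; ring_nf
    rw [e1, e2, hP1]
    have hx0 : x ≠ 0 := ne_of_gt hx
    have hprodrel : (∏ t ∈ range (n+1), ((x+1) + (t:ℚ))) * x
        = (∏ t ∈ range (n+1), (x + (t:ℚ))) * (x + (n+1)) := by
      rw [← hP2, hP1]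
    have hxn : x + ((n:ℚ)+1) ≠ 0 := by positivity
    rw [div_sub_div _ _ hA hB, div_eq_div_iff (mul_ne_zero hA hB) (mul_ne_zero hA hxn)]
    push_cast [Nat.factorial_succ]
    linear_combination (n.factorial : ℚ) * (∏ t ∈ range (n+1), (x + (t:ℚ))) * hprodrel
lemma vz_prod_fact (jm : ℕ) : ∀ n : ℕ,
    ∏ t ∈ range (n+1), (((jm+1:ℕ):ℚ) + t) = ((jm+1+n).factorial : ℚ) / (jm.factorial : ℚ) := by
  intro n
  induction n with
  | zero =>
    have h2 : (jm.factorial : ℚ) ≠ 0 := by exact_mod_cast Nat.factorial_ne_zero jm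
    simp only [Finset.prod_range_one, Nat.cast_zero, add_zero, Nat.factorial_succ]
    field_simp
    simp
  | succ n ih =>
    rw [Finset.prod_range_succ, ih]
    have h1 : (jm+1+(n+1)).factorial = (jm+1+n).factorial * (jm+1+n+1) := by
      rw [show jm+1+(n+1) = (jm+1+n)+1 by ring, Nat.factorial_succ]; ring
    rw [h1]
    have h2 : (jm.factorial : ℚ) ≠ 0 := by exact_mod_cast Nat.factorial_ne_zero jm
    rw [div_mul_eq_mul_div, div_eq_div_iff h2 h2]
    push_cast; ring
lemma vz_KL (k i n a : ℕ) (hik : i ≤ k) (han : a ≤ n) :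
    ∑ c ∈ range (n+1), ((-1:ℚ)^(n-c) * ((i+c).choose i : ℚ) * ((k-i+n-1-c).choose (n-c) : ℚ) *
      (if a ≤ i+c then ((k.choose (i+c-a)) : ℚ) else 0))
    = if a = n then (((k+n).choose i : ℚ)) else 0 := by
  rcases eq_or_lt_of_le hik with heq | hlt
  · -- k = i
    subst heq
    rw [Finset.sum_eq_single_of_mem n (self_mem_range_succ n)]
    · rw [show i - i + n - 1 - n = 0 by omega, Nat.sub_self]
      simp only [pow_zero, Nat.choose_zero_right, Nat.cast_one, one_mul, mul_one]
      rw [if_pos (by omega : a ≤ i + n)]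
      by_cases ha : a = n
      · subst ha
        rw [if_pos rfl, show i + a - a = i by omega, Nat.choose_self]
        push_cast; ring
      · rw [if_neg ha, Nat.choose_eq_zero_of_lt (by omega : i < i + n - a)]
        push_cast; ring
    · intro c hc hcn
      rw [Nat.choose_eq_zero_of_lt (by
        simp only [Finset.mem_range] at hc
        omega : i - i + n - 1 - c < n - c)]
      push_cast; ring
  · -- i < k
    obtain ⟨jm, rfl⟩ : ∃ jm, k = i + (jm+1) := ⟨k - i - 1, by omega⟩
    have hfne : ∀ m : ℕ, ((m.factorial : ℚ)) ≠ 0 := fun m => by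
      exact_mod_cast Nat.factorial_ne_zero m
    set K : ℚ := ((i+jm+1).factorial : ℚ) /
        ((n.factorial : ℚ) * (i.factorial : ℚ) * (jm.factorial : ℚ)) with hK
    rcases eq_or_lt_of_le han with haeq | halt
    · -- a = n
      rw [eq_comm] at haeq
      subst haeq
      rw [if_pos rfl]
      rcases Nat.eq_zero_or_pos n with hn0 | hn1
      · subst hn0
        rw [Finset.sum_range_one, show i+(jm+1)-i+0-1-0 = jm by omega]
        simp only [Nat.sub_zero, Nat.add_zero, Nat.sub_self, pow_zero, Nat.choose_zero_right,
          Nat.add_sub_cancel, Nat.choose_self, Nat.cast_one, one_mul, mul_one,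
          if_pos (show 0 ≤ i + 0 by omega)]
        rw [if_pos (Nat.zero_le i)]
      · set P : ℚ[X] := (descPochhammer ℚ n).comp (X + C (i:ℚ)) with hPdef
        have hdegP : P.natDegree = n := by
          rw [hPdef, natDegree_comp, descPochhammer_natDegree, natDegree_X_add_C, mul_one]
        set v : ℚ := ((jm+1+n : ℕ):ℚ) with hvdef
        obtain ⟨q, hq⟩ := Polynomial.X_sub_C_dvd_sub_C_eval (a := v) (p := P)
        have hq0 : q ≠ 0 := by
          intro h; rw [h, mul_zero] at hq
          have h2 := congrArg Polynomial.natDegree hq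
          rw [natDegree_sub_C, hdegP, natDegree_zero] at h2; omega
        have hqdeg : q.natDegree < n := by
          have h1 := congrArg Polynomial.natDegree hq
          rw [natDegree_sub_C, hdegP, natDegree_mul (X_sub_C_ne_zero v) hq0,
            natDegree_X_sub_C] at h1
          omega
        have hPeval : ∀ c : ℕ, P.eval (c:ℚ) = ((i+c).descFactorial n : ℚ) := by
          intro c
          rw [hPdef]; simp only [eval_comp, eval_add, eval_X, eval_C]
          rw [← descPochhammer_eval_eq_descFactorial ℚ (i+c) n]; congr 1; push_cast; ring
        have hPv : P.eval v = ((i+jm+1+n).descFactorial n : ℚ) := by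
          rw [hvdef, hPdef]; simp only [eval_comp, eval_add, eval_X, eval_C]
          rw [← descPochhammer_eval_eq_descFactorial ℚ (i+jm+1+n) n]; congr 1; push_cast; ring
        have hterm : ∀ c ∈ range (n+1),
            (-1:ℚ)^(n-c) * ((i+c).choose i : ℚ) * ((i+(jm+1)-i+n-1-c).choose (n-c) : ℚ) *
              (if n ≤ i+c then ((i+(jm+1)).choose (i+c-n) : ℚ) else 0)
            = ((-1)^n * K) * ((-1)^c * (n.choose c : ℚ) * (P.eval (c:ℚ) * (v - (c:ℚ))⁻¹)) := by
          intro c hc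
          simp only [Finset.mem_range] at hc
          have hc' : c ≤ n := by omega
          have hsq : (-1:ℚ)^c * (-1)^c = 1 := by
            rw [← pow_add, ← two_mul, pow_mul]; norm_num
          have hsign : (-1:ℚ)^(n-c) = (-1)^n * (-1)^c := by
            have h := pow_add (-1:ℚ) (n-c) c
            rw [show n - c + c = n by omega] at h
            calc (-1:ℚ)^(n-c) = (-1)^(n-c) * ((-1)^c * (-1)^c) := by rw [hsq]; ring
            _ = (-1)^n * (-1)^c := by rw [← mul_assoc, ← h]
          have hvc : v - (c:ℚ) = ((jm+1+n-c : ℕ):ℚ) := by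
            rw [hvdef]; push_cast [Nat.cast_sub (show c ≤ jm+1+n by omega)]; ring
          have hXne : ((jm+1+n-c : ℕ):ℚ) ≠ 0 := Nat.cast_ne_zero.mpr (by omega)
          rw [show i+(jm+1)-i+n-1-c = jm+n-c by omega, hPeval c, hvc]
          by_cases h1 : i + c < n
          · rw [if_neg (by omega), Nat.descFactorial_eq_zero_iff_lt.mpr h1]
            push_cast; ring
          · rw [if_pos (by omega)]
            have hfs : (jm+1+n-c).factorial = (jm+1+n-c) * (jm+n-c).factorial := by
              rw [show jm+1+n-c = (jm+n-c)+1 by omega, Nat.factorial_succ]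
            rw [Nat.cast_choose ℚ (show i ≤ i + c by omega),
                Nat.cast_choose ℚ (show n - c ≤ jm + n - c by omega),
                Nat.cast_choose ℚ (show i + c - n ≤ i + (jm+1) by omega),
                Nat.cast_choose ℚ (show c ≤ n by omega),
                Nat.descFactorial_eq_factorial_mul_choose (i+c) n,
                Nat.cast_mul,
                Nat.cast_choose ℚ (show n ≤ i + c by omega),
                show i + c - i = c by omega,
                show jm+n-c-(n-c) = jm by omega,
                show i+(jm+1)-(i+c-n) = jm+1+n-c by omega,
                show i+(jm+1) = i+jm+1 by omega,
                hfs, hK, hsign]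
            push_cast
            field_simp
        rw [Finset.sum_congr rfl hterm, ← Finset.mul_sum]
        have hsplit : ∀ c ∈ range (n+1),
            (-1:ℚ)^c * (n.choose c : ℚ) * (P.eval (c:ℚ) * (v - (c:ℚ))⁻¹)
            = -((-1:ℚ)^c * (n.choose c : ℚ) * q.eval (c:ℚ))
              + P.eval v * ((-1)^c * (n.choose c : ℚ) * (v - (c:ℚ))⁻¹) := by
          intro c hc
          simp only [Finset.mem_range] at hc
          have hlt2 : (c:ℚ) < v := by
            rw [hvdef]; exact_mod_cast (show c < jm+1+n by omega)
          have hvc : v - (c:ℚ) ≠ 0 := sub_ne_zero.mpr (ne_of_gt hlt2)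
          have hPe : P.eval (c:ℚ) = ((c:ℚ) - v) * q.eval (c:ℚ) + P.eval v := by
            have h3 := congrArg (Polynomial.eval (c:ℚ)) hq
            simp only [eval_sub, eval_mul, eval_C, eval_X] at h3
            linarith [h3]
          rw [hPe]
          field_simp
          ring
        rw [Finset.sum_congr rfl hsplit, Finset.sum_add_distrib, Finset.sum_neg_distrib,
          vz_alt_sum_poly n q hqdeg, neg_zero, zero_add, ← Finset.mul_sum]
        have hreflect : ∑ c ∈ range (n+1), (-1:ℚ)^c * (n.choose c : ℚ) * (v - (c:ℚ))⁻¹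
            = (-1:ℚ)^n * ((n.factorial : ℚ) * (jm.factorial : ℚ) / ((jm+1+n).factorial : ℚ)) := by
          rw [← Finset.sum_range_reflect]
          have hre : ∀ d ∈ range (n+1),
              (-1:ℚ)^(n+1-1-d) * ((n.choose (n+1-1-d)) : ℚ) * (v - (((n+1-1-d) : ℕ):ℚ))⁻¹
              = (-1)^n * ((-1)^d * ((n.choose d):ℚ) * ((((jm+1:ℕ)):ℚ) + (d:ℚ))⁻¹) := by
            intro d hd
            simp only [Finset.mem_range] at hd
            have hd' : d ≤ n := by omega
            have hsq : (-1:ℚ)^d * (-1)^d = 1 := by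
              rw [← pow_add, ← two_mul, pow_mul]; norm_num
            have hsign : (-1:ℚ)^(n-d) = (-1)^n * (-1)^d := by
              have h := pow_add (-1:ℚ) (n-d) d
              rw [show n - d + d = n by omega] at h
              calc (-1:ℚ)^(n-d) = (-1)^(n-d) * ((-1)^d * (-1)^d) := by rw [hsq]; ring
              _ = (-1)^n * (-1)^d := by rw [← mul_assoc, ← h]
            rw [show n+1-1-d = n-d by omega, Nat.choose_symm hd', hsign]
            have hv2 : v - (((n-d : ℕ)):ℚ) = (((jm+1:ℕ)):ℚ) + (d:ℚ) := by
              rw [hvdef]; push_cast [Nat.cast_sub hd']; ring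
            rw [hv2]
            ring
          rw [Finset.sum_congr rfl hre, ← Finset.mul_sum,
            vz_inv_sum n ((jm+1 : ℕ):ℚ) (by exact_mod_cast Nat.succ_pos jm),
            vz_prod_fact jm n, div_div_eq_mul_div]
        rw [hreflect, hPv]
        rw [Nat.descFactorial_eq_factorial_mul_choose, Nat.cast_mul,
          Nat.cast_choose ℚ (show n ≤ i+jm+1+n by omega),
          Nat.cast_choose ℚ (show i ≤ i+(jm+1)+n by omega),
          show i+jm+1+n-n = i+jm+1 by omega,
          show i+(jm+1)+n-i = jm+1+n by omega,
          show i+(jm+1)+n = i+jm+1+n by omega, hK]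
        have hcancel : ∀ A B C3 : ℚ, ((-1:ℚ)^n * A) * (B * ((-1:ℚ)^n * C3)) = A * (B * C3) := by
          intro A B C3
          have hsq : (-1:ℚ)^n * (-1) ^ n = 1 := by rw [← pow_add, ← two_mul, pow_mul]; norm_num
          linear_combination (A * B * C3) * hsq
        rw [hcancel]
        field_simp

    · -- a < n
      rw [if_neg (by omega)]
      set r := n - 1 - a with hrdef
      set P : ℚ[X] := ((descPochhammer ℚ a).comp (X + C (i:ℚ))) *
          ((descPochhammer ℚ r).comp (C ((jm+n : ℕ):ℚ) - X)) with hPdef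
      have hdeg1 : ((descPochhammer ℚ a).comp (X + C (i:ℚ))).natDegree = a := by
        rw [natDegree_comp, descPochhammer_natDegree, natDegree_X_add_C, mul_one]
      have hdeg2 : ((descPochhammer ℚ r).comp (C ((jm+n : ℕ):ℚ) - X)).natDegree = r := by
        rw [natDegree_comp, descPochhammer_natDegree,
          show (C ((jm+n:ℕ):ℚ) - X) = -(X - C ((jm+n:ℕ):ℚ)) by ring,
          natDegree_neg, natDegree_X_sub_C, mul_one]
      have hdegP : P.natDegree < n := by
        have h := Polynomial.natDegree_mul_le (p := (descPochhammer ℚ a).comp (X + C (i:ℚ)))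
          (q := (descPochhammer ℚ r).comp (C ((jm+n : ℕ):ℚ) - X))
        rw [hdeg1, hdeg2] at h
        rw [← hPdef] at h
        omega
      have hPeval : ∀ c : ℕ, c ≤ n → P.eval (c:ℚ)
          = ((i+c).descFactorial a : ℚ) * (((jm+n-c).descFactorial r : ℚ)) := by
        intro c hc
        rw [hPdef]
        simp only [eval_mul, eval_comp, eval_add, eval_sub, eval_X, eval_C]
        congr 1
        · rw [← descPochhammer_eval_eq_descFactorial ℚ (i+c) a]; congr 1; push_cast; ring
        · rw [← descPochhammer_eval_eq_descFactorial ℚ (jm+n-c) r]; congr 1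
          push_cast [Nat.cast_sub (show c ≤ jm + n by omega)]; ring
      have hterm : ∀ c ∈ range (n+1),
          (-1:ℚ)^(n-c) * ((i+c).choose i : ℚ) * ((i+(jm+1)-i+n-1-c).choose (n-c) : ℚ) *
            (if a ≤ i+c then ((i+(jm+1)).choose (i+c-a) : ℚ) else 0)
          = ((-1)^n * K) * ((-1)^c * (n.choose c : ℚ) * P.eval (c:ℚ)) := by
        intro c hc
        simp only [Finset.mem_range] at hc
        have hc' : c ≤ n := by omega
        have hsq : (-1:ℚ)^c * (-1)^c = 1 := by
          rw [← pow_add, ← two_mul, pow_mul]; norm_num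
        have hsign : (-1:ℚ)^(n-c) = (-1)^n * (-1)^c := by
          have h := pow_add (-1:ℚ) (n-c) c
          rw [show n - c + c = n by omega] at h
          calc (-1:ℚ)^(n-c) = (-1)^(n-c) * ((-1)^c * (-1)^c) := by rw [hsq]; ring
          _ = (-1)^n * (-1)^c := by rw [← mul_assoc, ← h]
        rw [show i+(jm+1)-i+n-1-c = jm+n-c by omega, hPeval c hc']
        by_cases h1 : i + c < a
        · rw [if_neg (by omega)]
          rw [Nat.descFactorial_eq_zero_iff_lt.mpr h1]
          push_cast; ring
        · by_cases h2 : jm + 1 + a < c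
          · rw [if_pos (by omega), Nat.choose_eq_zero_of_lt (by omega : i+(jm+1) < i+c-a),
              Nat.descFactorial_eq_zero_iff_lt.mpr (by omega : jm+n-c < r)]
            push_cast; ring
          · rw [if_pos (by omega)]
            rw [Nat.cast_choose ℚ (show i ≤ i + c by omega),
                Nat.cast_choose ℚ (show n - c ≤ jm + n - c by omega),
                Nat.cast_choose ℚ (show i + c - a ≤ i + (jm+1) by omega),
                Nat.cast_choose ℚ (show c ≤ n by omega),
                Nat.descFactorial_eq_factorial_mul_choose (i+c) a,
                Nat.descFactorial_eq_factorial_mul_choose (jm+n-c) r,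
                Nat.cast_mul, Nat.cast_mul,
                Nat.cast_choose ℚ (show a ≤ i + c by omega),
                Nat.cast_choose ℚ (show r ≤ jm + n - c by omega)]
            rw [show i + c - i = c by omega,
                show jm+n-c-(n-c) = jm by omega,
                show i+(jm+1)-(i+c-a) = jm+1+a-c by omega,
                show jm+n-c-r = jm+1+a-c by omega,
                show i+c-a = i+c-a from rfl,
                show n - c = n-c from rfl,
                show jm+n-c = jm+(n-c) by omega,
                show i+(jm+1) = i+jm+1 by omega,
                hK, hsign]
            
            field_simp
      rw [Finset.sum_congr rfl hterm, ← Finset.mul_sum,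
        vz_alt_sum_poly n P hdegP, mul_zero]

lemma vz_aux (k i : ℕ) (hik : i ≤ k) : ∀ m : ℕ,
    ∀ Ω : Matrix (Fin (m+1)) (Fin (m+1)) ℚ,
    (∀ a b : Fin (m+1), Ω a b = if (a : ℕ) ≤ i + b then (Nat.choose k (i + b - a) : ℚ) else 0) →
    Ω.det = ∏ j ∈ Finset.range (m+1), ((k+m-j).choose i : ℚ) / ((i+j).choose i : ℚ) := by
  intro m
  induction m with
  | zero =>
    intro Ω hΩ
    rw [Matrix.det_fin_one, hΩ 0 0]
    simp [Nat.choose_self]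
  | succ m ih =>
    intro Ω hΩ
    set x : Fin (m+2) → ℚ := fun c =>
      (-1:ℚ)^(m+1-(c:ℕ)) * ((i+(c:ℕ)).choose i : ℚ) *
        ((k-i+(m+1)-1-(c:ℕ)).choose (m+1-(c:ℕ)) : ℚ) with hx
    set t : ℚ := ((k+(m+1)).choose i : ℚ) with ht
    have hcol : ∀ a : Fin (m+2), (∑ c, x c • Ω a c)
        = if a = Fin.last (m+1) then t else 0 := by
      intro a
      have ha : (a:ℕ) ≤ m+1 := by have := a.isLt; omega
      have hKL := vz_KL k i (m+1) (a:ℕ) hik ha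
      have h3 : (if a = Fin.last (m+1) then t else 0)
          = (if (a:ℕ) = m+1 then (((k+(m+1)).choose i : ℕ) : ℚ) else 0) := by
        by_cases hal : a = Fin.last (m+1)
        · rw [if_pos hal, if_pos (by rw [hal]; exact Fin.val_last _), ht]
        · rw [if_neg hal, if_neg (fun h => hal (Fin.ext (by rw [h, Fin.val_last])))]
      rw [h3, ← hKL,
        ← Fin.sum_univ_eq_sum_range (fun cc => (-1:ℚ)^(m+1-cc) * ((i+cc).choose i : ℚ) *
            ((k-i+(m+1)-1-cc).choose (m+1-cc) : ℚ) *
            (if (a:ℕ) ≤ i+cc then ((k.choose (i+cc-(a:ℕ))) : ℚ) else 0)) (m+1+1)]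
      apply Finset.sum_congr rfl
      intro c _
      simp only [hx, smul_eq_mul, hΩ a c]
    have hdetup := Matrix.det_updateCol_sum Ω (Fin.last (m+1)) x
    have h2 : (fun r => ∑ c, x c • Ω r c)
        = fun r => if r = Fin.last (m+1) then t else 0 := funext hcol
    rw [h2] at hdetup
    have hdetD : (Ω.updateCol (Fin.last (m+1))
          (fun r => if r = Fin.last (m+1) then t else 0)).det
        = t * (Ω.submatrix Fin.castSucc Fin.castSucc).det := by
      rw [Matrix.det_succ_column _ (Fin.last (m+1))]
      rw [Finset.sum_eq_single_of_mem (Fin.last (m+1)) (Finset.mem_univ _)]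
      · rw [Matrix.updateCol_self, if_pos rfl]
        have hsub : (Ω.updateCol (Fin.last (m+1))
              (fun r => if r = Fin.last (m+1) then t else 0)).submatrix
              (Fin.last (m+1)).succAbove (Fin.last (m+1)).succAbove
            = Ω.submatrix Fin.castSucc Fin.castSucc := by
          ext a b
          rw [Fin.succAbove_last]
          simp only [Matrix.submatrix_apply]
          rw [Matrix.updateCol_ne (Fin.castSucc_lt_last b).ne]
        rw [hsub, Fin.val_last,
          show ((-1:ℚ))^((m+1)+(m+1)) = 1 from by rw [← two_mul, pow_mul]; norm_num]
        ring
      · intro b _ hb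
        rw [Matrix.updateCol_self, if_neg hb]
        ring
    have hsubh : ∀ a b : Fin (m+1), (Ω.submatrix Fin.castSucc Fin.castSucc) a b
        = if (a:ℕ) ≤ i + b then (k.choose (i + b - a) : ℚ) else 0 := by
      intro a b
      simp only [Matrix.submatrix_apply]
      rw [hΩ]
      simp only [Fin.coe_castSucc]
    have hIH := ih (Ω.submatrix Fin.castSucc Fin.castSucc) hsubh
    have hxlast : x (Fin.last (m+1)) = ((i+(m+1)).choose i : ℚ) := by
      rw [hx]
      simp only [Fin.val_last, Nat.sub_self, pow_zero, one_mul, Nat.choose_zero_right,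
        Nat.cast_one, mul_one]
    have hxne : x (Fin.last (m+1)) ≠ 0 := by
      rw [hxlast]
      exact_mod_cast (Nat.choose_pos (Nat.le_add_right i (m+1))).ne'
    have hdet : Ω.det = t * (Ω.submatrix Fin.castSucc Fin.castSucc).det / x (Fin.last (m+1)) := by
      rw [← hdetD, hdetup, smul_eq_mul, mul_comm, mul_div_assoc,
        div_self hxne, mul_one]
    rw [hdet, hIH, hxlast]
    have hnum : ∏ j ∈ range (m+2), ((k+(m+1)-j).choose i : ℚ)
        = ((k+(m+1)).choose i : ℚ) * ∏ j ∈ range (m+1), ((k+m-j).choose i : ℚ) := by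
      rw [Finset.prod_range_succ' (fun j => ((k+(m+1)-j).choose i : ℚ)) (m+1)]
      rw [show k+(m+1)-0 = k+(m+1) by omega, mul_comm]
      congr 1
      apply Finset.prod_congr rfl
      intro j _
      congr 2
      omega
    have hden : ∏ j ∈ range (m+2), ((i+j).choose i : ℚ)
        = (∏ j ∈ range (m+1), ((i+j).choose i : ℚ)) * ((i+(m+1)).choose i : ℚ) :=
      Finset.prod_range_succ _ _
    have hdenne : (∏ j ∈ range (m+1), ((i+j).choose i : ℚ)) ≠ 0 := by
      apply Finset.prod_ne_zero_iff.mpr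
      intro j _
      exact_mod_cast (Nat.choose_pos (Nat.le_add_right i j)).ne'
    have hlastne : ((i+(m+1)).choose i : ℚ) ≠ 0 := by
      exact_mod_cast (Nat.choose_pos (Nat.le_add_right i (m+1))).ne'
    rw [Finset.prod_div_distrib, Finset.prod_div_distrib, hnum, hden]
    field_simp
    rw [ht]; ring

/-- van Zeipel's determinant: for `s ≥ 1`, the `s × s` Toeplitz matrix `Ω` with
`(a,b)` entry `C(k, i + b - a)` (zero when `i + b < a`; the convention `C(ξ,η) = 0`
for `η > ξ` is automatic for `Nat.choose`) has
`det Ω = ∏_{j=0}^{s-1} C(k+s-1-j, i) / C(i+j, i)` (computed in `ℚ`). -/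
theorem vanZeipel_det (k s i : ℕ) (hs : 1 ≤ s)
    (Ω : Matrix (Fin s) (Fin s) ℚ)
    (hΩ : ∀ a b : Fin s, Ω a b =
      if (a : ℕ) ≤ i + b then (Nat.choose k (i + b - a) : ℚ) else 0) :
    Ω.det = ∏ j ∈ Finset.range s,
      (Nat.choose (k + s - 1 - j) i : ℚ) / (Nat.choose (i + j) i : ℚ) := by
  obtain ⟨m, rfl⟩ : ∃ m, s = m+1 := ⟨s-1, by omega⟩
  by_cases hik : i ≤ k
  · rw [vz_aux k i hik m Ω hΩ]
    apply Finset.prod_congr rfl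
    intro j hj
    simp only [Finset.mem_range] at hj
    rw [show k+(m+1)-1-j = k+m-j by omega]
  · push_neg at hik
    have htri : Ω.BlockTriangular OrderDual.toDual := by
      intro a b hab
      have hab' : a < b := hab
      have h1 : (a:ℕ) < (b:ℕ) := hab'
      rw [hΩ, if_pos (by omega), Nat.choose_eq_zero_of_lt (by omega), Nat.cast_zero]
    have hdet0 : Ω.det = 0 := by
      rw [Matrix.det_of_lowerTriangular Ω htri]
      apply Finset.prod_eq_zero (Finset.mem_univ (0 : Fin (m+1)))
      rw [hΩ, if_pos (by omega)]
      rw [Nat.choose_eq_zero_of_lt (by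
        have : ((0 : Fin (m+1)) : ℕ) = 0 := rfl
        omega), Nat.cast_zero]
    rw [hdet0]
    symm
    apply Finset.prod_eq_zero (Finset.self_mem_range_succ m)
    rw [show k+(m+1)-1-m = k by omega, Nat.choose_eq_zero_of_lt hik, Nat.cast_zero, zero_div]
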